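/- Let W be a complex Hilbert space, A = B(W) the C*-algebra of bounded linear operators on W, and M a Hilbert C*-module over A. Let (w_i)_{i≥1} be a sequence in M such that ⟨w_i, w_j⟩ is a compact operator on W for all i, j, and let ε > 0. Then there exists a sequence (q_j)_{j≥1} in M such that: (i) each q_j is either 0 or normalized; (ii) ⟨q_i, q_j⟩ = 0 for i ≠ j; (iii) each q_j lies in the closed A-submodule of M generated by w_1,…,w_j; and (iv) for each j there exists v in the closed A-submodule generated by {q_i : i ≥ 1} with ‖w_j − v‖_M ≤ ε. -/

import Mathlib

/-- A (right) Hilbert C*-module over a C*-algebra `A`: a right `A`-module `M` with an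
`A`-valued inner product, `A`-linear in the second variable, satisfying the listed axioms,
whose norm is `‖u‖ = ‖⟨u,u⟩‖^(1/2)` (so that completeness of `M` as a normed group is
completeness for this norm). -/
structure HilbertCStarModule (A : Type*) (M : Type*) [CStarAlgebra A] [PartialOrder A]
    [StarOrderedRing A] [NormedAddCommGroup M] where
  smul : M → A → M
  inner : M → M → A
  add_smul : ∀ (u v : M) (c : A), smul (u + v) c = smul u c + smul v c
  smul_add : ∀ (u : M) (c d : A), smul u (c + d) = smul u c + smul u d
  smul_mul : ∀ (u : M) (c d : A), smul u (c * d) = smul (smul u c) d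
  smul_one : ∀ u : M, smul u 1 = u
  inner_add_right : ∀ u v w : M, inner u (v + w) = inner u v + inner u w
  inner_smul_right : ∀ (u v : M) (c : A), inner u (smul v c) = inner u v * c
  star_inner : ∀ u v : M, star (inner u v) = inner v u
  inner_self_nonneg : ∀ u : M, 0 ≤ inner u u
  inner_self_eq_zero : ∀ u : M, inner u u = 0 → u = 0
  norm_eq : ∀ u : M, ‖u‖ = Real.sqrt ‖inner u u‖

open scoped NNReal

section GSAux
variable {W : Type*} [NormedAddCommGroup W] [InnerProductSpace ℂ W] [CompleteSpace W]

lemma gsaux_apply_alg (lam : ℝ) (x : W) : (algebraMap ℝ (W →L[ℂ] W) lam) x = (lam : ℂ) • x := by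
  rw [Algebra.algebraMap_eq_smul_one]
  simp [Complex.coe_smul]

lemma gsaux_approx_eigen {T : W →L[ℂ] W} (hT : IsSelfAdjoint T) {lam : ℝ}
    (hmem : lam ∈ spectrum ℝ T) {c : ℝ} (hc : 0 < c) :
    ∃ x : W, ‖x‖ = 1 ∧ ‖(algebraMap ℝ (W →L[ℂ] W) lam - T) x‖ < c := by
  by_contra hcon
  push_neg at hcon
  set S : W →L[ℂ] W := algebraMap ℝ (W →L[ℂ] W) lam - T with hS
  have hsym : ∀ x y : W, (inner ℂ (S x) y : ℂ) = inner ℂ x (S y) := by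
    intro x y
    simp only [hS, ContinuousLinearMap.sub_apply, gsaux_apply_alg, inner_sub_left,
      inner_sub_right, inner_smul_left, inner_smul_right, Complex.conj_ofReal]
    simp only [sub_right_inj]
    exact hT.isSymmetric x y
  set K : ℝ≥0 := ⟨c⁻¹, by positivity⟩ with hK
  have hbdd : ∀ x : W, ‖x‖ ≤ K * ‖S x‖ := by
    intro x
    rcases eq_or_ne x 0 with rfl | hx
    · simp
    · have hxn : (0:ℝ) < ‖x‖ := norm_pos_iff.2 hx
      have h1 : ‖(‖x‖⁻¹ : ℂ) • x‖ = 1 := by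
        rw [norm_smul]; simp [hxn.ne']
      have h2 := hcon _ h1
      rw [map_smul, norm_smul] at h2
      simp only [norm_inv, Complex.norm_real, Real.norm_eq_abs,
        abs_of_nonneg (norm_nonneg x)] at h2
      show ‖x‖ ≤ c⁻¹ * ‖S x‖
      have h3 : ‖x‖⁻¹ * ‖x‖ = 1 := inv_mul_cancel₀ hxn.ne'
      have h4 : c * ‖x‖ ≤ ‖S x‖ := by
        have h5 := mul_le_mul_of_nonneg_right h2 (norm_nonneg x)
        calc c * ‖x‖ ≤ ‖x‖⁻¹ * ‖S x‖ * ‖x‖ := h5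
          _ = ‖S x‖ := by field_simp
      rw [le_inv_mul_iff₀ hc]
      exact h4
  have hanti : AntilipschitzWith K ⇑S :=
    ContinuousLinearMap.antilipschitz_of_bound S hbdd
  have hinj : Function.Injective ⇑S := hanti.injective
  have hclosed : IsClosed (Set.range ⇑S) := hanti.isClosed_range S.uniformContinuous
  have hrange : LinearMap.range (S : W →ₗ[ℂ] W) = ⊤ := by
    have hcl : IsClosed ((LinearMap.range (S : W →ₗ[ℂ] W) : Submodule ℂ W) : Set W) := by
      have he : ((LinearMap.range (S : W →ₗ[ℂ] W) : Submodule ℂ W) : Set W) = Set.range ⇑S := by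
        ext z; simp [LinearMap.mem_range]
      rw [he]; exact hclosed
    have horth : (LinearMap.range (S : W →ₗ[ℂ] W))ᗮ = ⊥ := by
      rw [Submodule.eq_bot_iff]
      intro y hy
      rw [Submodule.mem_orthogonal] at hy
      have hy' : ∀ x : W, (inner ℂ x (S y) : ℂ) = 0 := fun x => by
        rw [← hsym]; exact hy (S x) (LinearMap.mem_range_self _ x)
      have hSy : S y = 0 := by
        have := hy' (S y)
        rwa [inner_self_eq_zero] at this
      have : S y = S 0 := by rw [hSy, map_zero]
      exact hinj this
    haveI : CompleteSpace (LinearMap.range (S : W →ₗ[ℂ] W)) := hcl.completeSpace_coe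
    exact Submodule.orthogonal_eq_bot_iff.mp horth
  have hbij : Function.Bijective ⇑S :=
    ⟨hinj, LinearMap.range_eq_top.1 hrange⟩
  exact (spectrum.mem_iff.mp hmem) (ContinuousLinearMap.isUnit_iff_bijective.2 hbij)

lemma gsaux_eigenvector {T : W →L[ℂ] W} (hT : IsSelfAdjoint T) (hcpt : IsCompactOperator ⇑T)
    {lam : ℝ} (hlam : 0 < lam) (hmem : lam ∈ spectrum ℝ T) :
    ∃ e : W, ‖e‖ = 1 ∧ T e = (lam : ℂ) • e := by
  set S : W →L[ℂ] W := algebraMap ℝ (W →L[ℂ] W) lam - T with hS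
  have hx : ∀ n : ℕ, ∃ x : W, ‖x‖ = 1 ∧ ‖S x‖ < 1 / (n + 1) :=
    fun n => gsaux_approx_eigen hT hmem (by positivity)
  choose x hx1 hx2 using hx
  have hK : IsCompact (closure (⇑T '' Metric.closedBall 0 1)) :=
    hcpt.isCompact_closure_image_closedBall (𝕜₁ := ℂ) 1
  have hmemK : ∀ n, T (x n) ∈ closure (⇑T '' Metric.closedBall 0 1) := fun n =>
    subset_closure ⟨x n, by simp [hx1 n], rfl⟩
  obtain ⟨y, -, φ, hφ, hy⟩ := hK.tendsto_subseq hmemK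
  have hS0 : Filter.Tendsto (fun n => S (x (φ n))) Filter.atTop (nhds 0) := by
    rw [tendsto_zero_iff_norm_tendsto_zero]
    apply squeeze_zero (fun n => norm_nonneg _) (fun n => (hx2 (φ n)).le)
    have : Filter.Tendsto (fun n : ℕ => 1 / ((n : ℝ) + 1)) Filter.atTop (nhds 0) :=
      tendsto_one_div_add_atTop_nhds_zero_nat
    exact this.comp (hφ.tendsto_atTop.comp Filter.tendsto_id) |>.congr (fun n => rfl)
  have hxlim : Filter.Tendsto (fun n => x (φ n)) Filter.atTop (nhds ((lam : ℂ)⁻¹ • y)) := by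
    have heq : ∀ n, x (φ n) = (lam : ℂ)⁻¹ • (S (x (φ n)) + T (x (φ n))) := by
      intro n
      have : S (x (φ n)) + T (x (φ n)) = (lam : ℂ) • x (φ n) := by
        simp [hS, ContinuousLinearMap.sub_apply, gsaux_apply_alg]
      rw [this, smul_smul, inv_mul_cancel₀ (by exact_mod_cast hlam.ne'), one_smul]
    rw [Filter.tendsto_congr heq]
    have := (hS0.add hy).const_smul ((lam : ℂ)⁻¹)
    rw [zero_add] at this
    exact this
  set e : W := (lam : ℂ)⁻¹ • y with he
  have hTe : Filter.Tendsto (fun n => T (x (φ n))) Filter.atTop (nhds (T e)) :=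
    (T.continuous.tendsto e).comp hxlim
  have hye : y = T e := tendsto_nhds_unique hy hTe
  have hnorm : ‖e‖ = 1 := by
    have h1 : Filter.Tendsto (fun n => ‖x (φ n)‖) Filter.atTop (nhds ‖e‖) :=
      (continuous_norm.tendsto e).comp hxlim
    have h2 : (fun n => ‖x (φ n)‖) = fun _ => (1:ℝ) := funext fun n => hx1 (φ n)
    rw [h2] at h1
    exact (tendsto_nhds_unique h1 tendsto_const_nhds)
  refine ⟨e, hnorm, ?_⟩
  have : T e = y := hye.symm
  rw [this, he, smul_smul, mul_inv_cancel₀ (by exact_mod_cast hlam.ne'), one_smul]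

lemma gsaux_gap {T : W →L[ℂ] W} (hT : IsSelfAdjoint T) (hcpt : IsCompactOperator ⇑T)
    {δ : ℝ} (hδ : 0 < δ) : ∃ d : ℝ, 0 < d ∧ d < δ ∧ d ∉ spectrum ℝ T := by
  by_contra hcon
  push_neg at hcon
  set lam : ℕ → ℝ := fun n => δ / 2 + δ / (n + 3) with hlamdef
  have hlam_pos : ∀ n, 0 < lam n := fun n => by positivity
  have hlam_half : ∀ n, δ / 2 < lam n := fun n => by
    have : 0 < δ / ((n:ℝ) + 3) := by positivity
    simp only [hlamdef]; linarith
  have hlam_lt : ∀ n, lam n < δ := by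
    intro n
    have h1 : δ / ((n:ℝ) + 3) ≤ δ / 3 := by
      apply div_le_div_of_nonneg_left hδ.le (by norm_num)
      push_cast; linarith [Nat.cast_nonneg (α := ℝ) n]
    have : 0 < δ / 3 := by positivity
    simp only [hlamdef]; linarith
  have hlam_anti : StrictAnti lam := by
    intro a b hab
    simp only [hlamdef]
    have : δ / ((b:ℝ) + 3) < δ / ((a:ℝ) + 3) := by
      apply div_lt_div_of_pos_left hδ (by positivity)
      have : ((a:ℝ)) < b := Nat.cast_lt.mpr hab
      linarith
    linarith
  have heig : ∀ n : ℕ, ∃ e : W, ‖e‖ = 1 ∧ T e = (lam n : ℂ) • e := fun n =>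
    gsaux_eigenvector hT hcpt (hlam_pos n) (hcon _ (hlam_pos n) (hlam_lt n))
  choose e he1 he2 using heig
  have horth : ∀ m n : ℕ, m ≠ n → (inner ℂ (e m) (e n) : ℂ) = 0 := by
    intro m n hmn
    have h1 : (lam n : ℂ) * inner ℂ (e m) (e n) = (lam m : ℂ) * inner ℂ (e m) (e n) := by
      have ha : (inner ℂ (e m) (T (e n)) : ℂ) = (lam n : ℂ) * inner ℂ (e m) (e n) := by
        rw [he2 n, inner_smul_right]
      have hb : (inner ℂ (T (e m)) (e n) : ℂ) = (lam m : ℂ) * inner ℂ (e m) (e n) := by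
        rw [he2 m, inner_smul_left, Complex.conj_ofReal]
      rw [← ha, ← hb]
      exact (hT.isSymmetric (e m) (e n)).symm
    have h2 : ((lam n : ℂ) - (lam m : ℂ)) * inner ℂ (e m) (e n) = 0 := by
      rw [sub_mul, h1, sub_self]
    rcases mul_eq_zero.mp h2 with h3 | h3
    · exfalso
      have : (lam n : ℂ) ≠ (lam m : ℂ) := by
        exact_mod_cast (hlam_anti.injective.ne (Ne.symm hmn))
      exact this (sub_eq_zero.mp h3)
    · exact h3
  have hdist : ∀ m n : ℕ, m ≠ n → (δ/2)^2 < dist (T (e m)) (T (e n))^2 := by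
    intro m n hmn
    rw [dist_eq_norm, he2 m, he2 n]
    have hns : ‖(lam m : ℂ) • e m - (lam n : ℂ) • e n‖^2
        = ‖(lam m : ℂ) • e m‖^2 - 2 * Complex.re (inner ℂ ((lam m : ℂ) • e m) ((lam n : ℂ) • e n)) + ‖(lam n : ℂ) • e n‖^2 := by
      exact norm_sub_sq (𝕜 := ℂ) _ _
    rw [hns, inner_smul_left, inner_smul_right, horth m n hmn, mul_zero, mul_zero]
    simp only [norm_smul, Complex.norm_real, he1, mul_one, Complex.zero_re, mul_zero]
    have h1 : |lam m| = lam m := abs_of_pos (hlam_pos m)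
    have h2 : |lam n| = lam n := abs_of_pos (hlam_pos n)
    simp only [Complex.norm_real, Real.norm_eq_abs] at *
    rw [h1, h2]
    nlinarith [hlam_half m, hlam_half n, hδ]
  have hK : IsCompact (closure (⇑T '' Metric.closedBall 0 1)) :=
    hcpt.isCompact_closure_image_closedBall (𝕜₁ := ℂ) 1
  have hmemK : ∀ n, T (e n) ∈ closure (⇑T '' Metric.closedBall 0 1) := fun n =>
    subset_closure ⟨e n, by simp [he1 n], rfl⟩
  obtain ⟨y, -, φ, hφ, hy⟩ := hK.tendsto_subseq hmemK
  have hcauchy : CauchySeq (fun n => T (e (φ n))) := hy.cauchySeq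
  obtain ⟨N, hN⟩ := Metric.cauchySeq_iff'.mp hcauchy (δ/2) (by positivity)
  have hd := hN (N+1) (by omega)
  have hne : φ (N+1) ≠ φ N := hφ.injective.ne (by omega)
  have := hdist _ _ hne
  nlinarith [dist_nonneg (x := T (e (φ (N+1)))) (y := T (e (φ N)))]

lemma gsaux_contOn {d : ℝ} {s : Set ℝ} (hd : d ∉ s) (G F : ℝ → ℝ)
    (hG : ∀ t, t < d → ContinuousAt G t) (hF : ∀ t, d < t → ContinuousAt F t) :
    ContinuousOn (fun t => if t < d then G t else F t) s := by
  intro t ht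
  apply ContinuousAt.continuousWithinAt
  rcases lt_trichotomy t d with h | h | h
  · apply (hG t h).congr
    filter_upwards [Iio_mem_nhds h] with x hx
    simp [Set.mem_Iio.mp hx]
  · exact absurd (h ▸ ht) hd
  · apply (hF t h).congr
    filter_upwards [Ioi_mem_nhds h] with x hx
    simp [not_lt.mpr (le_of_lt (Set.mem_Ioi.mp hx))]

lemma gsaux_normalize {T : W →L[ℂ] W} (hTpos : 0 ≤ T) (hcpt : IsCompactOperator ⇑T)
    {ε : ℝ} (hε : 0 < ε) (hTn : ε ^ 2 < ‖T‖) :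
    ∃ b c : W →L[ℂ] W, star b * T * b ≠ 0 ∧
      (star b * T * b) * (star b * T * b) = star b * T * b ∧
      ‖star (1 - b * c) * T * (1 - b * c)‖ ≤ ε ^ 2 := by
  classical
  have hT : IsSelfAdjoint T := .of_nonneg hTpos
  obtain ⟨d, hd0, hdlt, hdspec⟩ := gsaux_gap hT hcpt (show (0:ℝ) < ε ^ 2 by positivity)
  set χ : ℝ → ℝ := fun t => if t < d then 0 else 1 with hχdef
  set f : ℝ → ℝ := fun t => if t < d then 0 else (Real.sqrt t)⁻¹ with hfdef
  set g : ℝ → ℝ := fun t => if t < d then 0 else Real.sqrt t with hgdef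
  set h : ℝ → ℝ := fun t => if t < d then t else 0 with hhdef
  have hcχ : ContinuousOn χ (spectrum ℝ T) :=
    gsaux_contOn hdspec _ _ (fun t _ => continuousAt_const) (fun t _ => continuousAt_const)
  have hcf : ContinuousOn f (spectrum ℝ T) :=
    gsaux_contOn hdspec _ _ (fun t _ => continuousAt_const) (fun t ht =>
      (Real.continuous_sqrt.continuousAt).inv₀
        (ne_of_gt (Real.sqrt_pos.mpr (hd0.trans ht))))
  have hcg : ContinuousOn g (spectrum ℝ T) :=
    gsaux_contOn hdspec _ _ (fun t _ => continuousAt_const)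
      (fun t _ => Real.continuous_sqrt.continuousAt)
  have hch : ContinuousOn h (spectrum ℝ T) :=
    gsaux_contOn hdspec _ _ (fun t _ => continuousAt_id) (fun t _ => continuousAt_const)
  have hspec_nonneg : ∀ t ∈ spectrum ℝ T, 0 ≤ t := fun t ht =>
    spectrum_nonneg_of_nonneg hTpos ht
  set b : W →L[ℂ] W := cfc f T with hbdef
  set c : W →L[ℂ] W := cfc g T with hcdef
  set p : W →L[ℂ] W := cfc χ T with hpdef
  have hsb : star b = b := (cfc_predicate f T).star_eq
  have hid : cfc (fun t : ℝ => t) T = T := cfc_id' ℝ T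
  have hcid : ContinuousOn (fun t : ℝ => t) (spectrum ℝ T) := continuousOn_id
  -- b * T * b = p
  have hbTb : star b * T * b = p := by
    rw [hsb]
    have e1 : b * T = cfc (fun t => f t * t) T := by
      rw [← hid, hbdef, ← cfc_mul f (fun t : ℝ => t) T hcf hcid]
      simp [hid]
    have e2 : cfc (fun t => f t * t) T * b = cfc (fun t => f t * t * f t) T :=
      (cfc_mul (fun t => f t * t) f T (hcf.mul hcid) hcf).symm
    rw [e1, e2, hpdef]
    apply cfc_congr
    intro t ht
    simp only [hfdef, hχdef]
    split_ifs with h1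
    · ring
    · have ht0 : 0 < t := lt_of_lt_of_le hd0 (not_lt.mp h1)
      field_simp
      rw [Real.sq_sqrt ht0.le]
  -- p is idempotent
  have hpp : p * p = p := by
    rw [hpdef, ← cfc_mul χ χ T hcχ hcχ]
    apply cfc_congr
    intro t ht
    simp only [hχdef]
    split_ifs <;> norm_num
  -- b * c = p
  have hbc : b * c = p := by
    rw [hbdef, hcdef, hpdef, ← cfc_mul f g T hcf hcg]
    apply cfc_congr
    intro t ht
    simp only [hfdef, hgdef, hχdef]
    split_ifs with h1
    · ring
    · have ht0 : 0 < t := lt_of_lt_of_le hd0 (not_lt.mp h1)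
      exact inv_mul_cancel₀ (ne_of_gt (Real.sqrt_pos.mpr ht0))
  -- 1 - p as cfc
  have hone : (1 : W →L[ℂ] W) - p = cfc (fun t => 1 - χ t) T := by
    rw [hpdef, cfc_sub (fun _ : ℝ => (1:ℝ)) χ T continuousOn_const hcχ, cfc_const_one ℝ T]
  have hcone : ContinuousOn (fun t => 1 - χ t) (spectrum ℝ T) :=
    continuousOn_const.sub hcχ
  -- (1-p) * T * (1-p) = cfc h
  have hrem : (1 - p) * T * (1 - p) = cfc h T := by
    have e1 : cfc (fun t => (1 - χ t) * t) T = (1 - p) * T := by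
      rw [cfc_mul (fun t => 1 - χ t) (fun t : ℝ => t) T hcone hcid, hid, ← hone]
    have e2 : cfc (fun t => (1 - χ t) * t * (1 - χ t)) T = (1 - p) * T * (1 - p) := by
      rw [cfc_mul (fun t => (1 - χ t) * t) (fun t => 1 - χ t) T (hcone.mul hcid) hcone, e1, ← hone]
    rw [← e2]
    apply cfc_congr
    intro t ht
    simp only [hχdef, hhdef]
    split_ifs <;> ring
  have hnormh : ‖cfc h T‖ ≤ d := by
    apply norm_cfc_le hd0.le
    intro t ht
    simp only [hhdef]
    split_ifs with h1
    · rw [Real.norm_eq_abs, abs_of_nonneg (hspec_nonneg t ht)]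
      exact le_of_lt h1
    · simp [hd0.le]
  -- p ≠ 0
  have hTne : T ≠ 0 := by
    intro h0
    rw [h0, norm_zero] at hTn
    nlinarith
  haveI : Nontrivial (W →L[ℂ] W) := nontrivial_of_ne T 0 hTne
  have hp_ne : p ≠ 0 := by
    intro hp0
    have hTh : T = cfc h T := by
      have e := hrem
      rw [hp0, sub_zero, one_mul, mul_one] at e
      exact e
    rw [← hTh] at hnormh
    linarith
  refine ⟨b, c, ?_, ?_, ?_⟩
  · rw [hbTb]; exact hp_ne
  · rw [hbTb]; exact hpp
  · have hsp : star p = p := (cfc_predicate χ T).star_eq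
    have hstar : star ((1 : W →L[ℂ] W) - b * c) = 1 - b * c := by
      rw [hbc, star_sub, star_one, hsp]
    rw [hstar, hbc, hrem]
    linarith


end GSAux

section ModuleBasics
variable {A : Type*} {M : Type*} [CStarAlgebra A] [PartialOrder A]
    [StarOrderedRing A] [NormedAddCommGroup M] (H : HilbertCStarModule A M)

lemma gsm_smul_zero (u : M) : H.smul u 0 = 0 := by
  have := H.smul_add u 0 0
  rw [add_zero] at this
  exact left_eq_add.mp this

lemma gsm_zero_smul (c : A) : H.smul 0 c = 0 := by
  have := H.add_smul 0 0 c
  rw [add_zero] at this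
  exact left_eq_add.mp this

lemma gsm_inner_zero_right (u : M) : H.inner u 0 = 0 := by
  have := H.inner_add_right u 0 0
  rw [add_zero] at this
  exact left_eq_add.mp this

lemma gsm_inner_zero_left (u : M) : H.inner 0 u = 0 := by
  rw [← H.star_inner, gsm_inner_zero_right, star_zero]

lemma gsm_inner_neg_right (u v : M) : H.inner u (-v) = -H.inner u v := by
  have := H.inner_add_right u v (-v)
  rw [add_neg_cancel, gsm_inner_zero_right] at this
  exact (neg_eq_of_add_eq_zero_right this.symm).symm

lemma gsm_inner_sub_right (u v x : M) : H.inner u (v - x) = H.inner u v - H.inner u x := by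
  rw [sub_eq_add_neg, H.inner_add_right, gsm_inner_neg_right, sub_eq_add_neg]

lemma gsm_inner_add_left (u v x : M) : H.inner (u + v) x = H.inner u x + H.inner v x := by
  rw [← H.star_inner, H.inner_add_right, star_add, H.star_inner, H.star_inner]

lemma gsm_inner_neg_left (u v : M) : H.inner (-u) v = -H.inner u v := by
  rw [← H.star_inner, gsm_inner_neg_right, star_neg, H.star_inner]

lemma gsm_inner_sub_left (u v x : M) : H.inner (u - v) x = H.inner u x - H.inner v x := by
  rw [sub_eq_add_neg, gsm_inner_add_left, gsm_inner_neg_left, sub_eq_add_neg]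

lemma gsm_inner_smul_left (u v : M) (c : A) :
    H.inner (H.smul u c) v = star c * H.inner u v := by
  rw [← H.star_inner, H.inner_smul_right, star_mul, H.star_inner]

lemma gsm_smul_neg (u : M) (c : A) : H.smul u (-c) = -H.smul u c := by
  have := H.smul_add u c (-c)
  rw [add_neg_cancel, gsm_smul_zero] at this
  exact (neg_eq_of_add_eq_zero_right this.symm).symm

lemma gsm_neg_smul (u : M) (c : A) : H.smul (-u) c = -H.smul u c := by
  have := H.add_smul u (-u) c
  rw [add_neg_cancel, gsm_zero_smul] at this
  exact (neg_eq_of_add_eq_zero_right this.symm).symm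

lemma gsm_sub_smul (u v : M) (c : A) : H.smul (u - v) c = H.smul u c - H.smul v c := by
  rw [sub_eq_add_neg, H.add_smul, gsm_neg_smul, sub_eq_add_neg]

lemma gsm_inner_sum_right {ι : Type*} (s : Finset ι) (u : M) (f : ι → M) :
    H.inner u (∑ i ∈ s, f i) = ∑ i ∈ s, H.inner u (f i) := by
  classical
  induction s using Finset.cons_induction with
  | empty => simp [gsm_inner_zero_right]
  | cons a s ha ih => rw [Finset.sum_cons, Finset.sum_cons, H.inner_add_right, ih]

lemma gsm_sum_smul {ι : Type*} (s : Finset ι) (f : ι → M) (c : A) :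
    H.smul (∑ i ∈ s, f i) c = ∑ i ∈ s, H.smul (f i) c := by
  classical
  induction s using Finset.cons_induction with
  | empty => simp [gsm_zero_smul]
  | cons a s ha ih => rw [Finset.sum_cons, Finset.sum_cons, H.add_smul, ih]

lemma gsm_norm_sq (u : M) : ‖u‖ ^ 2 = ‖H.inner u u‖ := by
  rw [H.norm_eq, Real.sq_sqrt (norm_nonneg _)]

lemma gsm_star_inner_self (u : M) : star (H.inner u u) = H.inner u u := H.star_inner u u

lemma gsm_smul_proj (q : M) (hidem : H.inner q q * H.inner q q = H.inner q q) :
    H.smul q (H.inner q q) = q := by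
  set p := H.inner q q with hp
  have hsp : star p = p := gsm_star_inner_self H q
  have hz : H.inner (H.smul q p - q) (H.smul q p - q) = 0 := by
    rw [gsm_inner_sub_left, gsm_inner_sub_right, gsm_inner_sub_right,
      gsm_inner_smul_left, H.inner_smul_right, gsm_inner_smul_left]
    simp only [hsp, ← hp, hidem]
    simp
  have := H.inner_self_eq_zero _ hz
  exact sub_eq_zero.mp this

lemma gsm_inner_sub_smul (u : M) (s : A) :
    H.inner (u - H.smul u s) (u - H.smul u s)
      = star (1 - s) * H.inner u u * (1 - s) := by
  rw [gsm_inner_sub_left, gsm_inner_sub_right, gsm_inner_sub_right,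
    gsm_inner_smul_left, H.inner_smul_right, H.inner_smul_right, gsm_inner_smul_left]
  rw [star_sub, star_one]
  noncomm_ring

end ModuleBasics


section Glue
variable {W : Type*} [NormedAddCommGroup W] [InnerProductSpace ℂ W] [CompleteSpace W]
  {M : Type*} [NormedAddCommGroup M] [CompleteSpace M]

lemma gsm_normalize (H : HilbertCStarModule (W →L[ℂ] W) M) (u : M)
    (hcpt : IsCompactOperator ⇑(H.inner u u)) {ε : ℝ} (hε : 0 < ε) (hu : ε < ‖u‖) :
    ∃ b : W →L[ℂ] W,
      (H.inner (H.smul u b) (H.smul u b) ≠ 0 ∧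
        H.inner (H.smul u b) (H.smul u b) * H.inner (H.smul u b) (H.smul u b)
          = H.inner (H.smul u b) (H.smul u b)) ∧
      ∃ c : W →L[ℂ] W, ‖u - H.smul u (b * c)‖ ≤ ε := by
  set T := H.inner u u with hT
  have hTpos : 0 ≤ T := H.inner_self_nonneg u
  have hTn : ε ^ 2 < ‖T‖ := by
    rw [← gsm_norm_sq H]
    have h0 : 0 ≤ ε := hε.le
    nlinarith
  obtain ⟨b, c, hne, hidem, hnorm⟩ := gsaux_normalize hTpos hcpt hε hTn
  have hib : H.inner (H.smul u b) (H.smul u b) = star b * T * b := by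
    rw [gsm_inner_smul_left H, H.inner_smul_right, ← hT, mul_assoc]
  refine ⟨b, ⟨by rw [hib]; exact hne, by rw [hib]; exact hidem⟩, c, ?_⟩
  have hsq : ‖u - H.smul u (b * c)‖ ^ 2 ≤ ε ^ 2 := by
    rw [gsm_norm_sq H, gsm_inner_sub_smul H, ← hT]
    exact hnorm
  nlinarith [norm_nonneg (u - H.smul u (b * c))]

noncomputable def gsNormalizer (H : HilbertCStarModule (W →L[ℂ] W) M) (u : M) (ε : ℝ) :
    W →L[ℂ] W := by
  classical
  exact if h : ∃ b : W →L[ℂ] W,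
      (H.inner (H.smul u b) (H.smul u b) ≠ 0 ∧
        H.inner (H.smul u b) (H.smul u b) * H.inner (H.smul u b) (H.smul u b)
          = H.inner (H.smul u b) (H.smul u b)) ∧
      ∃ c : W →L[ℂ] W, ‖u - H.smul u (b * c)‖ ≤ ε
    then h.choose else 0

lemma gsNormalizer_spec (H : HilbertCStarModule (W →L[ℂ] W) M) (u : M)
    (hcpt : IsCompactOperator ⇑(H.inner u u)) {ε : ℝ} (hε : 0 < ε) (hu : ε < ‖u‖) :
    (H.inner (H.smul u (gsNormalizer H u ε)) (H.smul u (gsNormalizer H u ε)) ≠ 0 ∧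
        H.inner (H.smul u (gsNormalizer H u ε)) (H.smul u (gsNormalizer H u ε))
            * H.inner (H.smul u (gsNormalizer H u ε)) (H.smul u (gsNormalizer H u ε))
          = H.inner (H.smul u (gsNormalizer H u ε)) (H.smul u (gsNormalizer H u ε))) ∧
      ∃ c : W →L[ℂ] W, ‖u - H.smul u (gsNormalizer H u ε * c)‖ ≤ ε := by
  classical
  have h := gsm_normalize H u hcpt hε hu
  rw [gsNormalizer]
  simp only [dif_pos h]
  exact h.choose_spec

noncomputable def gsSeq (H : HilbertCStarModule (W →L[ℂ] W) M) (w : ℕ → M) (ε : ℝ) :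
    ℕ → M
  | j =>
    let qh := w j - ∑ i : Fin j, H.smul (gsSeq H w ε i.1) (H.inner (gsSeq H w ε i.1) (w j))
    if ‖qh‖ ≤ ε then 0 else H.smul qh (gsNormalizer H qh ε)
  termination_by j => j
  decreasing_by exact i.2

lemma gsSeq_eq (H : HilbertCStarModule (W →L[ℂ] W) M) (w : ℕ → M) (ε : ℝ) (j : ℕ) :
    gsSeq H w ε j =
      (let qh := w j - ∑ i : Fin j, H.smul (gsSeq H w ε i.1) (H.inner (gsSeq H w ε i.1) (w j))
      if ‖qh‖ ≤ ε then 0 else H.smul qh (gsNormalizer H qh ε)) := by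
  rw [gsSeq]

end Glue

section Span
variable {W : Type*} [NormedAddCommGroup W] [InnerProductSpace ℂ W] [CompleteSpace W]
  {M : Type*} [NormedAddCommGroup M] [CompleteSpace M]

def NSpan (H : HilbertCStarModule (W →L[ℂ] W) M) (w : ℕ → M) (j : ℕ) (u : M) : Prop :=
  ∃ c : ℕ → (W →L[ℂ] W), u = ∑ k ∈ Finset.range (j + 1), H.smul (w k) (c k)

variable (H : HilbertCStarModule (W →L[ℂ] W) M) (w : ℕ → M)

lemma nspan_iff (j : ℕ) (u : M) :
    NSpan H w j u ↔ ∃ c : Fin (j + 1) → (W →L[ℂ] W), u = ∑ i, H.smul (w i.val) (c i) := by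
  constructor
  · rintro ⟨c, rfl⟩
    refine ⟨fun i => c i.val, ?_⟩
    rw [← Fin.sum_univ_eq_sum_range (fun k => H.smul (w k) (c k)) (j + 1)]
  · rintro ⟨c, rfl⟩
    classical
    refine ⟨fun k => if h : k < j + 1 then c ⟨k, h⟩ else 0, ?_⟩
    rw [← Fin.sum_univ_eq_sum_range (fun k => H.smul (w k) (if h : k < j + 1 then c ⟨k, h⟩ else 0)) (j + 1)]
    apply Finset.sum_congr rfl
    intro i _
    simp [i.isLt]

lemma nspan_w {i j : ℕ} (h : i ≤ j) : NSpan H w j (w i) := by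
  classical
  refine ⟨fun k => if k = i then 1 else 0, ?_⟩
  rw [Finset.sum_eq_single i]
  · simp [H.smul_one]
  · intro b _ hb
    simp [hb, gsm_smul_zero]
  · intro hi
    exact absurd (Finset.mem_range.mpr (by omega)) hi

lemma nspan_zero (j : ℕ) : NSpan H w j 0 :=
  ⟨fun _ => 0, by simp [gsm_smul_zero]⟩

lemma nspan_add {j : ℕ} {u v : M} (hu : NSpan H w j u) (hv : NSpan H w j v) :
    NSpan H w j (u + v) := by
  obtain ⟨c, rfl⟩ := hu
  obtain ⟨d, rfl⟩ := hv
  exact ⟨fun k => c k + d k, by rw [← Finset.sum_add_distrib]; simp [H.smul_add]⟩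

lemma nspan_neg {j : ℕ} {u : M} (hu : NSpan H w j u) : NSpan H w j (-u) := by
  obtain ⟨c, rfl⟩ := hu
  exact ⟨fun k => -(c k), by rw [← Finset.sum_neg_distrib]; simp [gsm_smul_neg]⟩

lemma nspan_sub {j : ℕ} {u v : M} (hu : NSpan H w j u) (hv : NSpan H w j v) :
    NSpan H w j (u - v) := by
  rw [sub_eq_add_neg]
  exact nspan_add H w hu (nspan_neg H w hv)

lemma nspan_smul {j : ℕ} {u : M} (a : W →L[ℂ] W) (hu : NSpan H w j u) :
    NSpan H w j (H.smul u a) := by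
  obtain ⟨c, rfl⟩ := hu
  refine ⟨fun k => c k * a, ?_⟩
  rw [gsm_sum_smul]
  exact Finset.sum_congr rfl fun k _ => (H.smul_mul (w k) (c k) a).symm ▸ rfl

lemma nspan_sum {j : ℕ} {ι : Type*} (s : Finset ι) (f : ι → M)
    (h : ∀ i ∈ s, NSpan H w j (f i)) : NSpan H w j (∑ i ∈ s, f i) := by
  classical
  induction s using Finset.cons_induction with
  | empty => simpa using nspan_zero H w j
  | cons a s ha ih =>
    rw [Finset.sum_cons]
    exact nspan_add H w (h a (Finset.mem_cons_self a s))
      (ih fun i hi => h i (Finset.mem_cons_of_mem hi))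

lemma nspan_mono {i j : ℕ} (hij : i ≤ j) {u : M} (hu : NSpan H w i u) : NSpan H w j u := by
  classical
  obtain ⟨c, rfl⟩ := hu
  refine ⟨fun k => if k < i + 1 then c k else 0, ?_⟩
  rw [← Finset.sum_subset (Finset.range_subset_range.mpr (by omega : i + 1 ≤ j + 1))]
  · apply Finset.sum_congr rfl
    intro k hk
    simp [Finset.mem_range.mp hk]
  · intro k _ hk
    have : ¬ k < i + 1 := fun h => hk (Finset.mem_range.mpr h)
    simp [this, gsm_smul_zero]

lemma gsm_inner_sum_left {ι : Type*} (s : Finset ι) (u : M) (f : ι → M) :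
    H.inner (∑ i ∈ s, f i) u = ∑ i ∈ s, H.inner (f i) u := by
  rw [← H.star_inner, gsm_inner_sum_right, star_sum]
  exact Finset.sum_congr rfl fun i _ => H.star_inner u (f i)

lemma gsaux_isCompact_sum {ι : Type*} (s : Finset ι) (F : ι → (W →L[ℂ] W))
    (h : ∀ i ∈ s, IsCompactOperator ⇑(F i)) : IsCompactOperator ⇑(∑ i ∈ s, F i) := by
  classical
  induction s using Finset.cons_induction with
  | empty =>
    simpa [ContinuousLinearMap.coe_zero] using
      (isCompactOperator_zero : IsCompactOperator (0 : W → W))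
  | cons a s ha ih =>
    rw [Finset.sum_cons]
    have hcoe : ⇑(F a + ∑ x ∈ s, F x) = ⇑(F a) + ⇑(∑ x ∈ s, F x) := rfl
    rw [hcoe]
    exact (h a (Finset.mem_cons_self a s)).add
      (ih fun i hi => h i (Finset.mem_cons_of_mem hi))

lemma nspan_inner_compact (h_compact : ∀ i j : ℕ, IsCompactOperator ⇑(H.inner (w i) (w j)))
    {j k : ℕ} {u v : M} (hu : NSpan H w j u) (hv : NSpan H w k v) :
    IsCompactOperator ⇑(H.inner u v) := by
  obtain ⟨c, rfl⟩ := hu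
  obtain ⟨d, rfl⟩ := hv
  rw [gsm_inner_sum_left]
  apply gsaux_isCompact_sum
  intro a _
  rw [gsm_inner_sum_right]
  apply gsaux_isCompact_sum
  intro b _
  rw [gsm_inner_smul_left H, H.inner_smul_right]
  have h1 : IsCompactOperator ⇑(star (c a) * H.inner (w a) (w b)) := by
    rw [ContinuousLinearMap.mul_def, ContinuousLinearMap.coe_comp]
    exact (h_compact a b).clm_comp (star (c a))
  have h2 : IsCompactOperator ⇑(star (c a) * H.inner (w a) (w b) * d b) := by
    rw [ContinuousLinearMap.mul_def, ContinuousLinearMap.coe_comp]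
    exact h1.comp_clm (d b)
  rwa [mul_assoc] at h2  -- adjust associativity if needed
end Span

/-- **Gram–Schmidt orthonormalization in Hilbert C*-modules over `B(W)`.** Given a sequence
`(w i)` with all `⟨w i, w j⟩` compact operators and `ε > 0`, there is a sequence `(q j)` of
vectors, each zero or normalized, mutually orthogonal, with `q j` in the closed submodule
generated by `w 0, …, w j`, and such that each `w j` lies within `ε` of the closed submodule
generated by all the `q i`. -/
theorem gram_schmidt_in_module_over_BW
    {W : Type*} [NormedAddCommGroup W] [InnerProductSpace ℂ W] [CompleteSpace W]
    {M : Type*} [NormedAddCommGroup M] [CompleteSpace M]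
    (H : HilbertCStarModule (W →L[ℂ] W) M)
    (w : ℕ → M)
    (h_compact : ∀ i j : ℕ, IsCompactOperator ⇑(H.inner (w i) (w j)))
    (ε : ℝ) (hε : 0 < ε) :
    ∃ q : ℕ → M,
      (∀ j : ℕ, q j = 0 ∨
        (H.inner (q j) (q j) ≠ 0 ∧
          H.inner (q j) (q j) * H.inner (q j) (q j) = H.inner (q j) (q j))) ∧
      (∀ i j : ℕ, i ≠ j → H.inner (q i) (q j) = 0) ∧
      (∀ j : ℕ, q j ∈ closure {u : M | ∃ c : Fin (j + 1) → (W →L[ℂ] W),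
        u = ∑ i, H.smul (w i.val) (c i)}) ∧
      (∀ j : ℕ, ∃ v ∈ closure {u : M | ∃ (s : Finset ℕ) (c : ℕ → (W →L[ℂ] W)),
        u = ∑ i ∈ s, H.smul (q i) (c i)}, ‖w j - v‖ ≤ ε) := by
  classical
  set q : ℕ → M := gsSeq H w ε with hq
  set qh : ℕ → M := fun j =>
    w j - ∑ i : Fin j, H.smul (q i.1) (H.inner (q i.1) (w j)) with hqh
  have hqeq : ∀ j, q j = if ‖qh j‖ ≤ ε then 0
      else H.smul (qh j) (gsNormalizer H (qh j) ε) := fun j => gsSeq_eq H w ε j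
  have key : ∀ j, NSpan H w j (q j) ∧
      (q j = 0 ∨ (H.inner (q j) (q j) ≠ 0 ∧
        H.inner (q j) (q j) * H.inner (q j) (q j) = H.inner (q j) (q j))) ∧
      (∀ i, i < j → H.inner (q i) (q j) = 0) := by
    intro j
    induction j using Nat.strong_induction_on with
    | _ j IH =>
    have hspan_qh : NSpan H w j (qh j) := by
      rw [hqh]
      apply nspan_sub H w (nspan_w H w (le_refl j))
      apply nspan_sum
      intro i _
      exact nspan_smul H w _ (nspan_mono H w (le_of_lt i.2) (IH i.1 i.2).1)
    have hcpt_qh : IsCompactOperator ⇑(H.inner (qh j) (qh j)) :=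
      nspan_inner_compact H w h_compact hspan_qh hspan_qh
    have horth_qh : ∀ i, i < j → H.inner (q i) (qh j) = 0 := by
      intro i hi
      rcases (IH i hi).2.1 with hz | ⟨hne, hidem⟩
      · rw [hz, gsm_inner_zero_left]
      · have hqi_proj : H.smul (q i) (H.inner (q i) (q i)) = q i :=
          gsm_smul_proj H (q i) hidem
        have hY : H.inner (q i) (w j) = H.inner (q i) (q i) * H.inner (q i) (w j) := by
          conv_lhs => rw [← hqi_proj]
          rw [gsm_inner_smul_left H, gsm_star_inner_self]
        have horthk : ∀ k, k < j → k ≠ i → H.inner (q i) (q k) = 0 := by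
          intro k hk hki
          rcases lt_or_gt_of_ne (Ne.symm hki) with hik | hik
          · exact (IH k hk).2.2 i hik
          · rw [← H.star_inner, (IH i hi).2.2 k hik, star_zero]
        have hterm : ∀ k : Fin j,
            H.inner (q i) (H.smul (q k.1) (H.inner (q k.1) (w j)))
              = if k.1 = i then H.inner (q i) (q i) * H.inner (q i) (w j) else 0 := by
          intro k
          rw [H.inner_smul_right]
          by_cases hk : k.1 = i
          · rw [if_pos hk, hk]
          · rw [if_neg hk, horthk k.1 k.2 hk, zero_mul]
        rw [hqh]
        simp only
        rw [gsm_inner_sub_right, gsm_inner_sum_right,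
          Finset.sum_congr rfl (fun k _ => hterm k),
          Finset.sum_eq_single_of_mem (⟨i, hi⟩ : Fin j) (Finset.mem_univ _)
            (by intro b _ hb; rw [if_neg (fun h => hb (Fin.ext h))]),
          if_pos rfl, ← hY, sub_self]
    by_cases hcase : ‖qh j‖ ≤ ε
    · have hz : q j = 0 := by rw [hqeq j, if_pos hcase]
      exact ⟨hz ▸ nspan_zero H w j, Or.inl hz,
        fun i hi => by rw [hz, gsm_inner_zero_right]⟩
    · push_neg at hcase
      have hqj : q j = H.smul (qh j) (gsNormalizer H (qh j) ε) := by
        rw [hqeq j, if_neg (not_le.mpr hcase)]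
      have spec := gsNormalizer_spec H (qh j) hcpt_qh hε hcase
      refine ⟨?_, Or.inr ?_, ?_⟩
      · rw [hqj]; exact nspan_smul H w _ hspan_qh
      · rw [hqj]; exact spec.1
      · intro i hi
        rw [hqj, H.inner_smul_right, horth_qh i hi, zero_mul]
  refine ⟨q, fun j => (key j).2.1, ?_, ?_, ?_⟩
  · intro i j hij
    rcases lt_or_gt_of_ne hij with h | h
    · exact (key j).2.2 i h
    · rw [← H.star_inner, (key i).2.2 j h, star_zero]
  · intro j
    exact subset_closure ((nspan_iff H w j (q j)).mp (key j).1)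
  · intro j
    have hfin : (∑ i : Fin j, H.smul (q i.1) (H.inner (q i.1) (w j)))
        = ∑ i ∈ Finset.range j, H.smul (q i) (H.inner (q i) (w j)) :=
      Fin.sum_univ_eq_sum_range (fun i => H.smul (q i) (H.inner (q i) (w j))) j
    by_cases hcase : ‖qh j‖ ≤ ε
    · refine ⟨∑ i ∈ Finset.range j, H.smul (q i) (H.inner (q i) (w j)),
        subset_closure ⟨Finset.range j, fun i => H.inner (q i) (w j), rfl⟩, ?_⟩
      have : w j - ∑ i ∈ Finset.range j, H.smul (q i) (H.inner (q i) (w j)) = qh j := by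
        rw [hqh]; simp only; rw [hfin]
      rw [this]
      exact hcase
    · push_neg at hcase
      have hcpt_qh : IsCompactOperator ⇑(H.inner (qh j) (qh j)) := by
        have hspan_qh : NSpan H w j (qh j) := by
          rw [hqh]
          apply nspan_sub H w (nspan_w H w (le_refl j))
          apply nspan_sum
          intro i _
          exact nspan_smul H w _ (nspan_mono H w (le_of_lt i.2) (key i.1).1)
        exact nspan_inner_compact H w h_compact hspan_qh hspan_qh
      have hqj : q j = H.smul (qh j) (gsNormalizer H (qh j) ε) := by
        rw [hqeq j, if_neg (not_le.mpr hcase)]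
      obtain ⟨c, hc⟩ := (gsNormalizer_spec H (qh j) hcpt_qh hε hcase).2
      set cc : ℕ → (W →L[ℂ] W) := fun i => if i = j then c else H.inner (q i) (w j) with hcc
      refine ⟨∑ i ∈ Finset.range (j + 1), H.smul (q i) (cc i),
        subset_closure ⟨Finset.range (j + 1), cc, rfl⟩, ?_⟩
      have hsplit : ∑ i ∈ Finset.range (j + 1), H.smul (q i) (cc i)
          = (∑ i ∈ Finset.range j, H.smul (q i) (H.inner (q i) (w j)))
            + H.smul (qh j) (gsNormalizer H (qh j) ε * c) := by
        rw [Finset.sum_range_succ]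
        congr 1
        · apply Finset.sum_congr rfl
          intro i hi
          rw [hcc]
          simp only
          rw [if_neg (by simp at hi; omega : i ≠ j)]
        · have hccj : cc j = c := by simp [hcc]
          rw [hccj, H.smul_mul, ← hqj]
      rw [hsplit]
      have : w j - ((∑ i ∈ Finset.range j, H.smul (q i) (H.inner (q i) (w j)))
          + H.smul (qh j) (gsNormalizer H (qh j) ε * c))
          = qh j - H.smul (qh j) (gsNormalizer H (qh j) ε * c) := by
        rw [hqh]; simp only; rw [hfin]; abel
      rw [this]
      exact hc
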